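/- For x ∈ (0,1] define, on the support [(1−x)/(1+x), (1+x)/(1−x)], the densities f_x(ℓ|0) = 2/(x(1+ℓ)³), f_x(ℓ|1) = 2ℓ/(x(1+ℓ)³), and the CDFs F_x(ℓ|0) = (1+x)Y_x(ℓ) − xY_x(ℓ)², F_x(ℓ|1) = (1−x)Y_x(ℓ) + xY_x(ℓ)², where Y_x(ℓ) = ((1+x)ℓ − (1−x))/(2x(1+ℓ)). Then for all 0 < x_l < x_h ≤ 1, each state s ∈ {0,1}, and each ℓ ∈ ((1−x_l)/(1+x_l), (1+x_l)/(1−x_l)): f_{x_l}(ℓ|s)/F_{x_l}(ℓ|s) > f_{x_h}(ℓ|s)/F_{x_h}(ℓ|s) and f_{x_l}(ℓ|s)/(1−F_{x_l}(ℓ|s)) > f_{x_h}(ℓ|s)/(1−F_{x_h}(ℓ|s)). -/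

import Mathlib

/-- Inverse of the multiplicative linear likelihood ratio. -/
noncomputable def YML (x ℓ : ℝ) : ℝ := ((1 + x)*ℓ - (1 - x)) / (2*x*(1 + ℓ))

/-- State-`s` density of the multiplicative linear experiment of weight `x`, with
signals labeled as likelihood ratios. -/
noncomputable def fML (x : ℝ) (s : Fin 2) (ℓ : ℝ) : ℝ :=
  if s = 0 then 2 / (x * (1 + ℓ)^3) else 2*ℓ / (x * (1 + ℓ)^3)

/-- State-`s` CDF of the multiplicative linear experiment of weight `x` (closed form). -/
noncomputable def FML (x : ℝ) (s : Fin 2) (ℓ : ℝ) : ℝ :=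
  if s = 0 then (1 + x) * YML x ℓ - x * (YML x ℓ)^2
  else (1 - x) * YML x ℓ + x * (YML x ℓ)^2

lemma MLratios (x ℓ : ℝ) (hx : 0 < x) (hx1 : x ≤ 1) (hℓ : 0 < ℓ)
    (hA : 0 < (1+x)*ℓ - (1-x)) (hC : 0 < (1+x) - (1-x)*ℓ) :
    fML x 0 ℓ / FML x 0 ℓ = 8 / ((1+ℓ)*(((1+x)*ℓ-(1-x)) * ((1+x)*ℓ+(3+x)))) ∧
    fML x 0 ℓ / (1 - FML x 0 ℓ) = 8 / ((1+ℓ)*(((1+x)-(1-x)*ℓ) * ((3+ℓ)-x*(1+ℓ)))) ∧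
    fML x 1 ℓ / FML x 1 ℓ = 8*ℓ / ((1+ℓ)*(((1+x)*ℓ-(1-x)) * ((1+3*ℓ)-x*(1+ℓ)))) ∧
    fML x 1 ℓ / (1 - FML x 1 ℓ) = 8*ℓ / ((1+ℓ)*(((1+x)-(1-x)*ℓ) * ((1+3*ℓ)+x*(1+ℓ)))) := by
  have hℓ1 : (0:ℝ) < 1 + ℓ := by linarith
  have hB : (0:ℝ) < (1+x)*ℓ+(3+x) := by nlinarith
  have hC' : (0:ℝ) < (3+ℓ)-x*(1+ℓ) := by nlinarith
  have hD : (0:ℝ) < (1+3*ℓ)-x*(1+ℓ) := by nlinarith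
  have hE : (0:ℝ) < (1+3*ℓ)+x*(1+ℓ) := by nlinarith
  have hF0 : FML x 0 ℓ = (((1+x)*ℓ-(1-x)) * ((1+x)*ℓ+(3+x))) / (4*x*(1+ℓ)^2) := by
    simp only [FML, YML, if_pos rfl, ↓reduceIte]
    field_simp [hx.ne', hℓ1.ne']
    ring
  have hF0' : 1 - FML x 0 ℓ = (((1+x)-(1-x)*ℓ) * ((3+ℓ)-x*(1+ℓ))) / (4*x*(1+ℓ)^2) := by
    rw [hF0]; field_simp [hx.ne', hℓ1.ne']; ring
  have hF1 : FML x 1 ℓ = (((1+x)*ℓ-(1-x)) * ((1+3*ℓ)-x*(1+ℓ))) / (4*x*(1+ℓ)^2) := by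
    have : (1 : Fin 2) ≠ 0 := by decide
    simp only [FML, YML, if_neg this]
    field_simp [hx.ne', hℓ1.ne']
    ring
  have hF1' : 1 - FML x 1 ℓ = (((1+x)-(1-x)*ℓ) * ((1+3*ℓ)+x*(1+ℓ))) / (4*x*(1+ℓ)^2) := by
    rw [hF1]; field_simp [hx.ne', hℓ1.ne']; ring
  have h10 : (1 : Fin 2) ≠ 0 := by decide
  refine ⟨?_, ?_, ?_, ?_⟩
  · rw [hF0]; simp only [fML, if_pos rfl, if_true]
    rw [div_eq_div_iff (div_pos (mul_pos hA hB) (by positivity)).ne'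
      (mul_pos hℓ1 (mul_pos hA hB)).ne']
    field_simp
    ring
  · rw [hF0']; simp only [fML, if_pos rfl, if_true]
    rw [div_eq_div_iff (div_pos (mul_pos hC hC') (by positivity)).ne'
      (mul_pos hℓ1 (mul_pos hC hC')).ne']
    field_simp
    ring
  · rw [hF1]; simp only [fML, if_neg h10]
    rw [div_eq_div_iff (div_pos (mul_pos hA hD) (by positivity)).ne'
      (mul_pos hℓ1 (mul_pos hA hD)).ne']
    field_simp
    ring
  · rw [hF1']; simp only [fML, if_neg h10]
    rw [div_eq_div_iff (div_pos (mul_pos hC hE) (by positivity)).ne'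
      (mul_pos hℓ1 (mul_pos hC hE)).ne']
    field_simp
    ring

set_option maxHeartbeats 1000000 in
/-- Multiplicative linear experiments with `x_l < x_h` satisfy the noisier-low-type
assumption: in each state, both the reverse hazard rate and the hazard rate of the
weight-`x_l` experiment strictly exceed those of the weight-`x_h` experiment on the
interior of the smaller support. -/
theorem stmt_15 (xl xh : ℝ) (hxl : 0 < xl) (hlh : xl < xh) (hxh : xh ≤ 1) :
    ∀ s : Fin 2, ∀ ℓ ∈ Set.Ioo ((1 - xl) / (1 + xl)) ((1 + xl) / (1 - xl)),
      fML xl s ℓ / FML xl s ℓ > fML xh s ℓ / FML xh s ℓ ∧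
      fML xl s ℓ / (1 - FML xl s ℓ) > fML xh s ℓ / (1 - FML xh s ℓ) := by
  intro s ℓ ⟨hlo, hhi⟩
  have hxl1 : xl < 1 := lt_of_lt_of_le hlh hxh
  have h1p : (0:ℝ) < 1 + xl := by linarith
  have h1m : (0:ℝ) < 1 - xl := by linarith
  have hℓ : 0 < ℓ := lt_of_le_of_lt (by positivity) hlo
  have hℓ1 : (0:ℝ) < 1 + ℓ := by linarith
  have h1 : 1 - xl < (1 + xl) * ℓ := by
    have := (div_lt_iff₀ h1p).mp hlo; linarith [this]
  have h2 : (1 - xl) * ℓ < 1 + xl := by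
    have := (lt_div_iff₀ h1m).mp hhi; linarith [this]
  have hAl : 0 < (1+xl)*ℓ - (1-xl) := by linarith
  have hCl : 0 < (1+xl) - (1-xl)*ℓ := by linarith
  have hAh : 0 < (1+xh)*ℓ - (1-xh) := by nlinarith
  have hCh : 0 < (1+xh) - (1-xh)*ℓ := by nlinarith
  obtain ⟨Rl0, Rl0', Rl1, Rl1'⟩ := MLratios xl ℓ hxl hxl1.le hℓ hAl hCl
  obtain ⟨Rh0, Rh0', Rh1, Rh1'⟩ := MLratios xh ℓ (hxl.trans hlh) hxh hℓ hAh hCh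
  have hBl : (0:ℝ) < (1+xl)*ℓ+(3+xl) := by nlinarith
  have hC'l : (0:ℝ) < (3+ℓ)-xl*(1+ℓ) := by nlinarith
  have hDl : (0:ℝ) < (1+3*ℓ)-xl*(1+ℓ) := by nlinarith
  have hEl : (0:ℝ) < (1+3*ℓ)+xl*(1+ℓ) := by nlinarith
  have key : ∀ Pl Ph : ℝ, 0 < Pl → Pl < Ph → ∀ a : ℝ, 0 < a →
      a / ((1+ℓ)*Ph) < a / ((1+ℓ)*Pl) := by
    intro Pl Ph hPl hP a ha
    exact div_lt_div_of_pos_left ha (mul_pos hℓ1 hPl)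
      (mul_lt_mul_of_pos_left hP hℓ1)
  have hd : 0 < xh - xl := by linarith
  have hs1 : (0:ℝ) < xh + xl + 2 := by linarith
  have hs2 : (0:ℝ) < 2 - xh - xl := by linarith
  have hs : s = 0 ∨ s = 1 := by omega
  rcases hs with rfl | rfl
  · constructor
    · rw [Rl0, Rh0]
      refine key _ _ (mul_pos hAl hBl) ?_ 8 (by norm_num)
      have e : ((1+xh)*ℓ-(1-xh)) * ((1+xh)*ℓ+(3+xh))
          - ((1+xl)*ℓ-(1-xl)) * ((1+xl)*ℓ+(3+xl))
          = (xh-xl) * ((xh+xl+2) * (1+ℓ)^2) := by ring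
      linarith [mul_pos hd (mul_pos hs1 (pow_pos hℓ1 2)), e]
    · rw [Rl0', Rh0']
      refine key _ _ (mul_pos hCl hC'l) ?_ 8 (by norm_num)
      have e : ((1+xh)-(1-xh)*ℓ) * ((3+ℓ)-xh*(1+ℓ))
          - ((1+xl)-(1-xl)*ℓ) * ((3+ℓ)-xl*(1+ℓ))
          = (xh-xl) * ((2-xh-xl) * (1+ℓ)^2) := by ring
      linarith [mul_pos hd (mul_pos hs2 (pow_pos hℓ1 2)), e]
  · constructor
    · rw [Rl1, Rh1]
      refine key _ _ (mul_pos hAl hDl) ?_ (8*ℓ) (by linarith)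
      have e : ((1+xh)*ℓ-(1-xh)) * ((1+3*ℓ)-xh*(1+ℓ))
          - ((1+xl)*ℓ-(1-xl)) * ((1+3*ℓ)-xl*(1+ℓ))
          = (xh-xl) * ((2-xh-xl) * (1+ℓ)^2) := by ring
      linarith [mul_pos hd (mul_pos hs2 (pow_pos hℓ1 2)), e]
    · rw [Rl1', Rh1']
      refine key _ _ (mul_pos hCl hEl) ?_ (8*ℓ) (by linarith)
      have e : ((1+xh)-(1-xh)*ℓ) * ((1+3*ℓ)+xh*(1+ℓ))
          - ((1+xl)-(1-xl)*ℓ) * ((1+3*ℓ)+xl*(1+ℓ))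
          = (xh-xl) * ((xh+xl+2) * (1+ℓ)^2) := by ring
      linarith [mul_pos hd (mul_pos hs1 (pow_pos hℓ1 2)), e]
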